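/- Let G' be obtained from G = SK_n (n ≥ 4) by an isometric expansion with respect to an isometric cover (G¹, G⁰, G²). Then G' is a two-dimensional partial cube (G' ∈ F(Q_3)) if and only if the expansion is peripheral (G¹ ⊆ G² or G² ⊆ G¹) and G⁰ is an isometric subtree of SK_n. -/

import Mathlib

open Finset

/-- The hypercube graph on subsets of `Fin m`. -/
def cubeGraph (m : ℕ) : SimpleGraph (Finset (Fin m)) where
  Adj A B := (symmDiff A B).card = 1
  symm := ⟨fun A B h => by show (symmDiff (B : Finset (Fin m)) A).card = 1; rwa [symmDiff_comm]⟩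
  loopless := ⟨fun A h => by change (symmDiff A A).card = 1 at h; simp only [symmDiff_self, bot_eq_empty, card_empty] at h; exact absurd h (by norm_num)⟩

/-- `V` is (the vertex set of) a partial cube isometrically embedded in `Q_m`:
the distance in the induced subgraph equals the Hamming distance. -/
def IsPC {m : ℕ} (V : Set (Finset (Fin m))) : Prop :=
  ∀ u v : V, ((cubeGraph m).induce V).dist u v = (symmDiff u.1 v.1).card

def Shatters {m : ℕ} (V : Set (Finset (Fin m))) (Y : Finset (Fin m)) : Prop :=
  ∀ Z ⊆ Y, ∃ B ∈ V, B ∩ Y = Z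

def VCdimLE {m : ℕ} (V : Set (Finset (Fin m))) (d : ℕ) : Prop :=
  ∀ Y : Finset (Fin m), Shatters V Y → Y.card ≤ d

inductive PCStep {m : ℕ} : Set (Finset (Fin m)) → Set (Finset (Fin m)) → Prop
  | contract (i : Fin m) (V : Set (Finset (Fin m))) :
      PCStep V ((fun B => B.erase i) '' V)
  | restrictPos (i : Fin m) (V : Set (Finset (Fin m))) :
      PCStep V {B ∈ V | i ∈ B}
  | restrictNeg (i : Fin m) (V : Set (Finset (Fin m))) :
      PCStep V {B ∈ V | i ∉ B}

/-- Partial-cube minor relation: a sequence of contractions and restrictions. -/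
def PCMinor {m : ℕ} : Set (Finset (Fin m)) → Set (Finset (Fin m)) → Prop :=
  Relation.ReflTransGen PCStep

/-- `W` is (the vertex set of) a `k`-dimensional subcube of `Q_m`. -/
def IsCubeFam {m : ℕ} (k : ℕ) (W : Set (Finset (Fin m))) : Prop :=
  ∃ (Y X : Finset (Fin m)), Disjoint Y X ∧ X.card = k ∧
    W = {B | ∃ Z ⊆ X, B = Y ∪ Z}

/-- `G` has the cube `Q_k` as a pc-minor. -/
def HasQMinor {m : ℕ} (V : Set (Finset (Fin m))) (k : ℕ) : Prop :=
  ∃ W, PCMinor V W ∧ IsCubeFam k W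

def hdist {m : ℕ} (A B : Finset (Fin m)) : ℕ := (symmDiff A B).card

def IsConvexIn {m : ℕ} (V S : Set (Finset (Fin m))) : Prop :=
  S ⊆ V ∧ ∀ u ∈ S, ∀ v ∈ S, ∀ x ∈ V, hdist u x + hdist x v = hdist u v → x ∈ S

def convexHullIn {m : ℕ} (V S : Set (Finset (Fin m))) : Set (Finset (Fin m)) :=
  ⋂₀ {T | S ⊆ T ∧ IsConvexIn V T}

def IsGatedIn {m : ℕ} (V S : Set (Finset (Fin m))) : Prop :=
  S ⊆ V ∧ ∀ x ∈ V, ∃ g ∈ S, ∀ y ∈ S, hdist x g + hdist g y = hdist x y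

/-- The standardly embedded full subdivision `SK_n` in `Q_n`: singletons and pairs. -/
def SKset (n : ℕ) : Set (Finset (Fin n)) := {B | B.card = 1 ∨ B.card = 2}

/-- A standardly embedded copy of `SK_n` in `Q_m` along the injection `ι`. -/
def skCopy {m : ℕ} (n : ℕ) (ι : Fin n → Fin m) : Set (Finset (Fin m)) :=
  (fun B => B.image ι) '' SKset n


/-- Isometric expansion of a partial cube along a cover `(V1, V0, V2)`:
one copy of `V1`, one copy of `V2` shifted into the new coordinate. -/
def expansion {m : ℕ} (V1 V2 : Set (Finset (Fin m))) : Set (Finset (Fin (m + 1))) :=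
  (fun B => B.image Fin.castSucc) '' V1 ∪
    (fun B => insert (Fin.last m) (B.image Fin.castSucc)) '' V2

section Basics
variable {n : ℕ}

lemma sd_card (A B : Finset (Fin n)) :
    (symmDiff A B).card + 2 * (A ∩ B).card = A.card + B.card := by
  classical
  have h1 : symmDiff A B = (A \ B) ∪ (B \ A) := by
    ext x; simp [Finset.mem_symmDiff, Finset.mem_union, Finset.mem_sdiff]
  have hd : Disjoint (A \ B) (B \ A) := by
    refine Finset.disjoint_left.mpr ?_
    intro a ha hb
    simp only [Finset.mem_sdiff] at ha hb
    exact ha.2 hb.1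
  have h2 : (symmDiff A B).card = (A \ B).card + (B \ A).card := by
    rw [h1, Finset.card_union_of_disjoint hd]
  have h3 : (A \ B).card + (A ∩ B).card = A.card :=
    Finset.card_sdiff_add_card_inter A B
  have h4 : (B \ A).card + (B ∩ A).card = B.card :=
    Finset.card_sdiff_add_card_inter B A
  have h5 : (B ∩ A).card = (A ∩ B).card := by rw [Finset.inter_comm]
  omega

lemma mem_of_sd_singleton {m : Finset (Fin n)} {x : Fin n}
    (h : (symmDiff m {x}).card = 1) (hm : 1 ≤ m.card) : x ∈ m := by
  by_contra hx
  have he : m ∩ {x} = ∅ := by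
    ext a; simp only [Finset.mem_inter, Finset.mem_singleton, Finset.notMem_empty, iff_false,
      not_and]
    rintro ha rfl; exact hx ha
  have hc := sd_card m {x}
  rw [he, h, Finset.card_singleton, Finset.card_empty] at hc
  omega

/-- symmDiff-adjacent SK-vertices: one singleton one pair. -/
lemma sd_adj_cards {A B : Finset (Fin n)} (h : (symmDiff A B).card = 1)
    (hA : A.card = 1 ∨ A.card = 2) (hB : B.card = 1 ∨ B.card = 2) :
    (A.card = 1 ∧ B.card = 2) ∨ (A.card = 2 ∧ B.card = 1) := by
  have hc := sd_card A B
  omega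

/-- A neighbor of a pair (within SK) is one of its singletons. -/
lemma adj_pair_eq {m : Finset (Fin n)} {x y : Fin n} (hxy : x ≠ y)
    (h : (symmDiff m {x, y}).card = 1) (hm : m.card = 1 ∨ m.card = 2) :
    m = {x} ∨ m = {y} := by
  have hp : ({x, y} : Finset (Fin n)).card = 2 := Finset.card_pair hxy
  have hm1 : m.card = 1 := by
    have := sd_adj_cards h hm (Or.inr hp)
    have hc := sd_card m {x, y}
    omega
  have hc := sd_card m {x, y}
  rw [h, hm1, hp] at hc
  have hint : (m ∩ {x, y}).card = 1 := by omega
  obtain ⟨a, ha⟩ := Finset.card_eq_one.mp hm1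
  subst ha
  have : a ∈ ({a} : Finset (Fin n)) ∩ {x, y} := by
    rw [Finset.mem_inter]
    refine ⟨Finset.mem_singleton_self a, ?_⟩
    by_contra hax
    have : ({a} : Finset (Fin n)) ∩ {x, y} = ∅ := by
      ext b; simp only [Finset.mem_inter, Finset.mem_singleton, Finset.notMem_empty, iff_false,
        not_and]
      rintro rfl; exact hax
    rw [this] at hint; simp at hint
  have ha2 := Finset.mem_inter.mp this |>.2
  rcases Finset.mem_insert.mp ha2 with rfl | hb
  · exact Or.inl rfl
  · exact Or.inr (by rw [Finset.mem_singleton.mp hb])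

/-- midpoint of two singletons. -/
lemma midpoint_singletons {m : Finset (Fin n)} {x y : Fin n} (hxy : x ≠ y)
    (hx : (symmDiff m {x}).card = 1) (hy : (symmDiff m {y}).card = 1)
    (hm : m.card = 1 ∨ m.card = 2) : m = {x, y} := by
  have hxm : x ∈ m := mem_of_sd_singleton hx (by omega)
  have hym : y ∈ m := mem_of_sd_singleton hy (by omega)
  have hsub : ({x, y} : Finset (Fin n)) ⊆ m := by
    intro a ha; rcases Finset.mem_insert.mp ha with rfl | h
    · exact hxm
    · rw [Finset.mem_singleton.mp h]; exact hym
  refine (Finset.eq_of_subset_of_card_le hsub ?_).symm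
  rw [Finset.card_pair hxy]; omega

-- concrete symmDiff computations
lemma sd_singleton_pair {x y : Fin n} (hxy : x ≠ y) :
    symmDiff ({x} : Finset (Fin n)) {x, y} = {y} := by
  ext a
  simp only [Finset.mem_symmDiff, Finset.mem_singleton, Finset.mem_insert]
  constructor
  · rintro (⟨rfl, h⟩ | ⟨(rfl | rfl), h⟩) <;> tauto
  · rintro rfl; right; exact ⟨Or.inr rfl, fun h => hxy h.symm⟩

lemma sd_two_singletons {x y : Fin n} (hxy : x ≠ y) :
    symmDiff ({x} : Finset (Fin n)) {y} = {x, y} := by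
  ext a
  simp only [Finset.mem_symmDiff, Finset.mem_singleton, Finset.mem_insert]
  constructor
  · rintro (⟨rfl, _⟩ | ⟨rfl, _⟩) <;> tauto
  · rintro (rfl | rfl)
    · exact Or.inl ⟨rfl, fun h => hxy h⟩
    · exact Or.inr ⟨rfl, fun h => hxy h.symm⟩

lemma sd_two_pairs {x y z : Fin n} (hxy : x ≠ y) (hxz : x ≠ z) (hyz : y ≠ z) :
    symmDiff ({x, y} : Finset (Fin n)) {x, z} = {y, z} := by
  ext a
  simp only [Finset.mem_symmDiff, Finset.mem_insert, Finset.mem_singleton]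
  constructor
  · rintro (⟨(rfl | rfl), h⟩ | ⟨(rfl | rfl), h⟩) <;> tauto
  · rintro (rfl | rfl)
    · exact Or.inl ⟨Or.inr rfl, by rintro (rfl | rfl) <;> simp_all⟩
    · exact Or.inr ⟨Or.inr rfl, by rintro (rfl | rfl) <;> simp_all⟩

end Basics


open SimpleGraph

section Graph
variable {n : ℕ} {V : Set (Finset (Fin n))}

lemma induce_adj_iff {u v : ↥V} :
    ((cubeGraph n).induce V).Adj u v ↔ (symmDiff u.1 v.1).card = 1 := Iff.rfl

/-- reachability from IsPC when endpoints differ -/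
lemma reachable_of_pc (hpc : IsPC V) {u v : ↥V} (huv : u ≠ v) :
    ((cubeGraph n).induce V).Reachable u v := by
  have hd := hpc u v
  have hne : (symmDiff u.1 v.1).card ≠ 0 := by
    intro h
    rw [Finset.card_eq_zero, Finset.symmDiff_eq_empty] at h
    exact huv (Subtype.ext h)
  by_contra hr
  rw [SimpleGraph.dist_eq_zero_iff_eq_or_not_reachable.mpr (Or.inr hr)] at hd
  exact hne hd.symm

/-- a vertex at distance 1 along some walk: first step -/
lemma exists_neighbor (hpc : IsPC V) {A B : Finset (Fin n)} (hA : A ∈ V) (hB : B ∈ V)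
    (hne : A ≠ B) : ∃ m ∈ V, (symmDiff A m).card = 1 := by
  have hr := reachable_of_pc hpc (u := ⟨A, hA⟩) (v := ⟨B, hB⟩)
    (fun h => hne (congrArg Subtype.val h))
  obtain ⟨p⟩ := hr
  have hl : p.length ≠ 0 := by
    intro h
    exact hne (congrArg Subtype.val (p.eq_of_length_eq_zero h))
  refine ⟨(p.getVert 1).1, (p.getVert 1).2, ?_⟩
  have := p.adj_getVert_succ (i := 0) (by omega)
  rw [p.getVert_zero] at this
  exact this

/-- midpoint extraction at distance two -/
lemma exists_midpoint (hpc : IsPC V) {A B : Finset (Fin n)} (hA : A ∈ V) (hB : B ∈ V)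
    (h2 : (symmDiff A B).card = 2) :
    ∃ m ∈ V, (symmDiff A m).card = 1 ∧ (symmDiff m B).card = 1 := by
  have hne : A ≠ B := by
    intro h; rw [h, symmDiff_self] at h2; simp at h2
  have hd : ((cubeGraph n).induce V).dist ⟨A, hA⟩ ⟨B, hB⟩ = 2 := by
    rw [hpc ⟨A, hA⟩ ⟨B, hB⟩]; exact h2
  have hr := reachable_of_pc hpc (u := ⟨A, hA⟩) (v := ⟨B, hB⟩)
    (fun h => hne (congrArg Subtype.val h))
  obtain ⟨p, hp⟩ := hr.exists_walk_length_eq_dist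
  rw [hd] at hp
  refine ⟨(p.getVert 1).1, (p.getVert 1).2, ?_, ?_⟩
  · have := p.adj_getVert_succ (i := 0) (by omega)
    rw [p.getVert_zero] at this
    exact this
  · have := p.adj_getVert_succ (i := 1) (by omega)
    have hend : p.getVert 2 = ⟨B, hB⟩ := by
      have := p.getVert_length
      rw [hp] at this
      exact this
    rw [hend] at this
    exact this

end Graph


section P
variable {n : ℕ} {V : Set (Finset (Fin n))}

/-- P1: two singletons in an isometric V force the pair. -/
lemma pair_mem (hV : V ⊆ SKset n) (hpc : IsPC V) {x y : Fin n} (hxy : x ≠ y)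
    (hx : ({x} : Finset (Fin n)) ∈ V) (hy : ({y} : Finset (Fin n)) ∈ V) :
    ({x, y} : Finset (Fin n)) ∈ V := by
  have h2 : (symmDiff ({x} : Finset (Fin n)) {y}).card = 2 := by
    rw [sd_two_singletons hxy]; exact Finset.card_pair hxy
  obtain ⟨m, hm, h1, h2'⟩ := exists_midpoint hpc hx hy h2
  have hmm : m = {x, y} := by
    apply midpoint_singletons hxy
    · rwa [symmDiff_comm]
    · exact h2'
    · exact hV hm
  rwa [hmm] at hm

/-- P2: two pairs sharing x force the singleton. -/
lemma singleton_mem (hV : V ⊆ SKset n) (hpc : IsPC V) {x y z : Fin n}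
    (hxy : x ≠ y) (hxz : x ≠ z) (hyz : y ≠ z)
    (hp1 : ({x, y} : Finset (Fin n)) ∈ V) (hp2 : ({x, z} : Finset (Fin n)) ∈ V) :
    ({x} : Finset (Fin n)) ∈ V := by
  have h2 : (symmDiff ({x, y} : Finset (Fin n)) {x, z}).card = 2 := by
    rw [sd_two_pairs hxy hxz hyz]; exact Finset.card_pair hyz
  obtain ⟨m, hm, h1, h2'⟩ := exists_midpoint hpc hp1 hp2 h2
  have e1 : m = {x} ∨ m = {y} := by
    apply adj_pair_eq hxy _ (hV hm)
    rwa [symmDiff_comm]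
  have e2 : m = {x} ∨ m = {z} := adj_pair_eq hxz h2' (hV hm)
  rcases e1 with rfl | rfl
  · exact hm
  · rcases e2 with h | h
    · rw [h] at hm; exact hm
    · exact absurd (Finset.singleton_injective h) hyz

/-- a member of V distinct from a pair in V yields one of the pair's singletons in V. -/
lemma singleton_nbr (hV : V ⊆ SKset n) (hpc : IsPC V) {x y : Fin n} (hxy : x ≠ y)
    (hp : ({x, y} : Finset (Fin n)) ∈ V) {B : Finset (Fin n)} (hB : B ∈ V)
    (hne : B ≠ {x, y}) :
    ({x} : Finset (Fin n)) ∈ V ∨ ({y} : Finset (Fin n)) ∈ V := by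
  obtain ⟨m, hm, h1⟩ := exists_neighbor hpc hp hB (fun h => hne h.symm)
  have := adj_pair_eq hxy (by rwa [symmDiff_comm] at h1) (hV hm)
  rcases this with rfl | rfl
  · exact Or.inl hm
  · exact Or.inr hm
end P


section T
variable {n : ℕ} {V : Set (Finset (Fin n))}

lemma adjSP {x y : Fin n} (hxy : x ≠ y) :
    (cubeGraph n).Adj {x} {x, y} := by
  show (symmDiff ({x} : Finset (Fin n)) {x, y}).card = 1
  rw [sd_singleton_pair hxy]; exact Finset.card_singleton y

lemma adjPS {x y : Fin n} (hxy : x ≠ y) :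
    (cubeGraph n).Adj {x, y} {y} := by
  have : ({x, y} : Finset (Fin n)) = {y, x} := Finset.pair_comm x y
  rw [this]
  exact (adjSP (Ne.symm hxy)).symm

lemma sing_ne_pair {x y z : Fin n} (hyz : y ≠ z) :
    ({x} : Finset (Fin n)) ≠ {y, z} := by
  intro h
  have := congrArg Finset.card h
  rw [Finset.card_singleton, Finset.card_pair hyz] at this
  exact absurd this (by norm_num)

lemma sub_ne {a b : Finset (Fin n)} {ha : a ∈ V} {hb : b ∈ V} (h : a ≠ b) :
    (⟨a, ha⟩ : ↥V) ≠ ⟨b, hb⟩ := fun he => h (congrArg Subtype.val he)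

/-- Two distinct paths: contradiction with acyclicity. -/
lemma no_theta (hV : V ⊆ SKset n) (hpc : IsPC V)
    (hac : ((cubeGraph n).induce V).IsAcyclic) {i j k : Fin n}
    (hij : i ≠ j) (hik : i ≠ k) (hjk : j ≠ k)
    (hi : ({i} : Finset (Fin n)) ∈ V) (hj : ({j} : Finset (Fin n)) ∈ V)
    (hk : ({k} : Finset (Fin n)) ∈ V)
    (hpij : ({i, j} : Finset (Fin n)) ∈ V) : False := by
  have hpik : ({i, k} : Finset (Fin n)) ∈ V := pair_mem hV hpc hik hi hk
  have hpkj : ({k, j} : Finset (Fin n)) ∈ V := pair_mem hV hpc (Ne.symm hjk) hk hj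
  have a1 : ((cubeGraph n).induce V).Adj ⟨{i}, hi⟩ ⟨{i, j}, hpij⟩ := adjSP hij
  have a2 : ((cubeGraph n).induce V).Adj ⟨{i, j}, hpij⟩ ⟨{j}, hj⟩ := adjPS hij
  have b1 : ((cubeGraph n).induce V).Adj ⟨{i}, hi⟩ ⟨{i, k}, hpik⟩ := adjSP hik
  have b2 : ((cubeGraph n).induce V).Adj ⟨{i, k}, hpik⟩ ⟨{k}, hk⟩ := adjPS hik
  have b3 : ((cubeGraph n).induce V).Adj ⟨{k}, hk⟩ ⟨{k, j}, hpkj⟩ := adjSP (Ne.symm hjk)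
  have b4 : ((cubeGraph n).induce V).Adj ⟨{k, j}, hpkj⟩ ⟨{j}, hj⟩ := adjPS (Ne.symm hjk)
  have hp : (Walk.cons a1 (Walk.cons a2 Walk.nil)).IsPath := by
    refine Walk.IsPath.cons (Walk.IsPath.cons (Walk.IsPath.nil) ?_) ?_
    · simp only [Walk.support_nil, List.mem_singleton]
      exact sub_ne (sing_ne_pair hij).symm  -- {i,j} ≠ {j} : need pair ≠ singleton
    · simp only [Walk.support_cons, Walk.support_nil, List.mem_cons, List.mem_singleton, List.not_mem_nil, or_false]
      push_neg
      exact ⟨sub_ne (sing_ne_pair hij), sub_ne (fun h => hij (Finset.singleton_injective h))⟩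
  have hq : (Walk.cons b1 (Walk.cons b2 (Walk.cons b3 (Walk.cons b4 Walk.nil)))).IsPath := by
    have hik' : ({i, k} : Finset (Fin n)) ≠ {k, j} := by
      intro h
      have : i ∈ ({k, j} : Finset (Fin n)) := h ▸ (Finset.mem_insert_self i {k})
      simp only [Finset.mem_insert, Finset.mem_singleton] at this
      tauto
    refine Walk.IsPath.cons (Walk.IsPath.cons (Walk.IsPath.cons
      (Walk.IsPath.cons (Walk.IsPath.nil) ?_) ?_) ?_) ?_
    · simp only [Walk.support_nil, List.mem_singleton]
      exact sub_ne (sing_ne_pair (Ne.symm hjk)).symm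
    · simp only [Walk.support_cons, Walk.support_nil, List.mem_cons, List.mem_singleton, List.not_mem_nil, or_false]
      push_neg
      exact ⟨sub_ne (sing_ne_pair (Ne.symm hjk)),
        sub_ne (fun h => hjk (Finset.singleton_injective h).symm)⟩
    · simp only [Walk.support_cons, Walk.support_nil, List.mem_cons, List.mem_singleton, List.not_mem_nil, or_false]
      push_neg
      exact ⟨sub_ne (Ne.symm (sing_ne_pair (x := k) hik)), sub_ne hik', sub_ne (Ne.symm (sing_ne_pair (x := j) hik))⟩
    · simp only [Walk.support_cons, Walk.support_nil, List.mem_cons, List.mem_singleton, List.not_mem_nil, or_false]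
      push_neg
      exact ⟨sub_ne (sing_ne_pair hik), sub_ne (fun h => hik (Finset.singleton_injective h)),
        sub_ne (sing_ne_pair (Ne.symm hjk)), sub_ne (fun h => hij (Finset.singleton_injective h))⟩
  have huniq := SimpleGraph.isAcyclic_iff_path_unique.mp hac
    ⟨Walk.cons a1 (Walk.cons a2 Walk.nil), hp⟩
    ⟨Walk.cons b1 (Walk.cons b2 (Walk.cons b3 (Walk.cons b4 Walk.nil))), hq⟩
  have hl := congrArg (fun r : ((cubeGraph n).induce V).Path ⟨{i}, hi⟩ ⟨{j}, hj⟩ =>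
    r.1.length) huniq
  simp only [Walk.length_cons, Walk.length_nil] at hl
  omega

end T


section C
variable {n : ℕ} {V : Set (Finset (Fin n))} {G : SimpleGraph (Finset (Fin n))}

/-- getVert agrees with support indexing. -/
lemma support_getElem_eq {α : Type*} {H : SimpleGraph α} {u v : α} (p : H.Walk u v)
    (i : ℕ) (hi : i < p.support.length) : p.support[i] = p.getVert i := by
  induction p generalizing i with
  | nil =>
    simp only [SimpleGraph.Walk.support_nil, List.length_singleton] at hi
    interval_cases i
    simp [SimpleGraph.Walk.getVert_zero]
  | cons h q ih =>
    match i with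
    | 0 => simp [SimpleGraph.Walk.support_cons, SimpleGraph.Walk.getVert_zero]
    | (i + 1) =>
      simp only [SimpleGraph.Walk.support_cons, List.getElem_cons_succ,
        SimpleGraph.Walk.getVert_cons_succ]
      exact ih i (by simpa [SimpleGraph.Walk.support_cons] using hi)

/-- diston a cycle, getVert is injective on 1..length -/
lemma cycle_getVert_inj {α : Type*} {H : SimpleGraph α} {u : α} {c : H.Walk u u}
    (hc : c.IsCycle) {i j : ℕ} (hi1 : 1 ≤ i) (hi2 : i ≤ c.length)
    (hj1 : 1 ≤ j) (hj2 : j ≤ c.length) (hij : i ≠ j) :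
    c.getVert i ≠ c.getVert j := by
  obtain ⟨i', rfl⟩ : ∃ i', i = i' + 1 := ⟨i - 1, by omega⟩
  obtain ⟨j', rfl⟩ : ∃ j', j = j' + 1 := ⟨j - 1, by omega⟩
  have hlen : c.support.length = c.length + 1 := c.length_support
  have hti : i' < c.support.tail.length := by
    rw [List.length_tail, hlen]; omega
  have htj : j' < c.support.tail.length := by
    rw [List.length_tail, hlen]; omega
  have e1 : c.support.tail[i'] = c.getVert (i' + 1) := by
    rw [List.getElem_tail]
    exact support_getElem_eq c (i' + 1) (by omega)
  have e2 : c.support.tail[j'] = c.getVert (j' + 1) := by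
    rw [List.getElem_tail]
    exact support_getElem_eq c (j' + 1) (by omega)
  intro h
  rw [← e1, ← e2] at h
  have := (hc.support_nodup.getElem_inj_iff).mp h
  omega
end C

section C2
variable {n : ℕ} {V : Set (Finset (Fin n))}

lemma cycle_card_alternates (hV : V ⊆ SKset n) {v : ↥V}
    (c : ((cubeGraph n).induce V).Walk v v) :
    ∀ i ≤ c.length, (c.getVert i).1.card =
      (if i % 2 = 0 then (v : Finset (Fin n)).card else 3 - (v : Finset (Fin n)).card) := by
  intro i
  induction i with
  | zero => intro _; simp [SimpleGraph.Walk.getVert_zero]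
  | succ i ih =>
    intro hi
    have hi' : i ≤ c.length := by omega
    have hIH := ih hi'
    have hadj := c.adj_getVert_succ (i := i) (by omega)
    have h1 : (symmDiff (c.getVert i).1 (c.getVert (i+1)).1).card = 1 := hadj
    have hsd := sd_card (c.getVert i).1 (c.getVert (i+1)).1
    rw [h1] at hsd
    have hA : (c.getVert i).1.card = 1 ∨ (c.getVert i).1.card = 2 := hV (c.getVert i).2
    have hB : (c.getVert (i+1)).1.card = 1 ∨ (c.getVert (i+1)).1.card = 2 :=
      hV (c.getVert (i+1)).2
    have hk0 : (v : Finset (Fin n)).card = 1 ∨ (v : Finset (Fin n)).card = 2 := hV v.2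
    rcases Nat.mod_two_eq_zero_or_one i with h | h
    · rw [if_pos h] at hIH
      rw [if_neg (by omega)]
      omega
    · rw [if_neg (by omega)] at hIH
      rw [if_pos (by omega)]
      omega

lemma mem_of_adj_singleton {A B : Finset (Fin n)} {x : Fin n}
    (h : (symmDiff A B).card = 1) (hA : A = {x}) (hB : 1 ≤ B.card) : x ∈ B := by
  apply mem_of_sd_singleton _ hB
  rw [symmDiff_comm, ← hA]; exact h

lemma cycle_three_singletons (hV : V ⊆ SKset n) {v : ↥V}
    (c : ((cubeGraph n).induce V).Walk v v) (hc : c.IsCycle) :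
    ∃ a b d : Fin n, a ≠ b ∧ a ≠ d ∧ b ≠ d ∧
      ({a} : Finset (Fin n)) ∈ V ∧ ({b} : Finset (Fin n)) ∈ V ∧
      ({d} : Finset (Fin n)) ∈ V := by
  have h3 := hc.three_le_length
  have hk0 : (v : Finset (Fin n)).card = 1 ∨ (v : Finset (Fin n)).card = 2 := hV v.2
  have hcard := cycle_card_alternates hV c
  -- length is even
  have hlv : c.getVert c.length = v := c.getVert_length
  have heven : c.length % 2 = 0 := by
    by_contra h
    have := hcard c.length le_rfl
    rw [if_neg h, hlv] at this
    omega
  -- helper: adjacency card-1 facts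
  have hadj : ∀ i, i < c.length →
      (symmDiff (c.getVert i).1 (c.getVert (i+1)).1).card = 1 :=
    fun i hi => c.adj_getVert_succ hi
  have hSK : ∀ i, (c.getVert i).1.card = 1 ∨ (c.getVert i).1.card = 2 :=
    fun i => hV (c.getVert i).2
  -- membership helpers: if getVert i is the singleton {z}, then z belongs to its neighbors
  have memfw : ∀ i z, i < c.length → (c.getVert i).1 = {z} → z ∈ (c.getVert (i+1)).1 := by
    intro i z hi hz
    have h0 := hadj i hi
    have hge : 1 ≤ (c.getVert (i+1)).1.card := by rcases hSK (i+1) with h | h <;> omega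
    apply mem_of_sd_singleton _ hge
    rw [symmDiff_comm, ← hz]
    exact h0
  have membw : ∀ i z, i < c.length → (c.getVert (i+1)).1 = {z} → z ∈ (c.getVert i).1 := by
    intro i z hi hz
    have h0 := hadj i hi
    have hge : 1 ≤ (c.getVert i).1.card := by rcases hSK i with h | h <;> omega
    apply mem_of_sd_singleton _ hge
    rw [← hz]
    exact h0
  -- exclude length 4
  have hne4 : c.length ≠ 4 := by
    intro h4
    have inj14 : ∀ i j : ℕ, 1 ≤ i → i ≤ c.length → 1 ≤ j → j ≤ c.length → i ≠ j →
        (c.getVert i).1 ≠ (c.getVert j).1 := by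
      intro i j h1 h2 h3 h5 h6 h7
      exact cycle_getVert_inj hc h1 h2 h3 h5 h6 (Subtype.ext h7)
    rcases hk0 with hk | hk
    · -- v singleton: getVert 2 and getVert 4 = v singletons, getVert 1,3 pairs
      obtain ⟨x, hx⟩ := Finset.card_eq_one.mp hk
      have hc2 : (c.getVert 2).1.card = 1 := by
        have := hcard 2 (by omega); rw [if_pos (by norm_num), hk] at this; exact this
      obtain ⟨y, hy⟩ := Finset.card_eq_one.mp hc2
      have hv4 : (c.getVert 4).1 = {x} := by rw [show (4:ℕ) = c.length from by omega, hlv, hx]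
      have hxy : x ≠ y := by
        intro he
        exact inj14 2 4 (by norm_num) (by omega) (by norm_num) (by omega) (by norm_num)
          (by rw [hy, hv4, he])
      have hA2 : (c.getVert 1).1.card = 2 := by
        have := hcard 1 (by omega); rw [if_neg (by norm_num), hk] at this; omega
      have hB2 : (c.getVert 3).1.card = 2 := by
        have := hcard 3 (by omega); rw [if_neg (by norm_num), hk] at this; omega
      have hxA : x ∈ (c.getVert (0+1)).1 := memfw 0 x (by omega) (by rw [c.getVert_zero, hx])
      have hyA : y ∈ (c.getVert 1).1 := membw 1 y (by omega) hy
      have hyB : y ∈ (c.getVert (2+1)).1 := memfw 2 y (by omega) hy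
      have hxB : x ∈ (c.getVert 3).1 := membw 3 x (by omega) (by norm_num; exact hv4)
      norm_num at hxA hyB
      have hA : (c.getVert 1).1 = {x, y} := by
        refine (Finset.eq_of_subset_of_card_le ?_ ?_).symm
        · intro a ha
          rcases Finset.mem_insert.mp ha with rfl | ha
          · exact hxA
          · rw [Finset.mem_singleton.mp ha]; exact hyA
        · rw [hA2, Finset.card_pair hxy]
      have hB : (c.getVert 3).1 = {x, y} := by
        refine (Finset.eq_of_subset_of_card_le ?_ ?_).symm
        · intro a ha
          rcases Finset.mem_insert.mp ha with rfl | ha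
          · exact hxB
          · rw [Finset.mem_singleton.mp ha]; exact hyB
        · rw [hB2, Finset.card_pair hxy]
      exact inj14 1 3 (by norm_num) (by omega) (by norm_num) (by omega) (by norm_num)
        (hA.trans hB.symm)
    · -- v pair: getVert 1, 3 singletons, getVert 2 and 4 = v pairs
      have hc1 : (c.getVert 1).1.card = 1 := by
        have := hcard 1 (by omega); rw [if_neg (by norm_num), hk] at this; exact this
      have hc3 : (c.getVert 3).1.card = 1 := by
        have := hcard 3 (by omega); rw [if_neg (by norm_num), hk] at this; exact this
      obtain ⟨x, hx⟩ := Finset.card_eq_one.mp hc1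
      obtain ⟨y, hy⟩ := Finset.card_eq_one.mp hc3
      have hxy : x ≠ y := by
        intro he
        exact inj14 1 3 (by norm_num) (by omega) (by norm_num) (by omega) (by norm_num)
          (by rw [hx, hy, he])
      have hc22 : (c.getVert 2).1.card = 2 := by
        have := hcard 2 (by omega); rw [if_pos (by norm_num), hk] at this; exact this
      have hx2 : x ∈ (c.getVert (1+1)).1 := memfw 1 x (by omega) hx
      have hy2 : y ∈ (c.getVert 2).1 := membw 2 y (by omega) hy
      norm_num at hx2
      have hx0 : x ∈ (c.getVert 0).1 := membw 0 x (by omega) (by norm_num; exact hx)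
      have hy4 : y ∈ (c.getVert (3+1)).1 := memfw 3 y (by omega) hy
      norm_num at hy4
      have hx4 : x ∈ (c.getVert 4).1 := by
        rw [show (4:ℕ) = c.length from by omega, hlv]
        rw [c.getVert_zero] at hx0
        exact hx0
      have hv2 : (c.getVert 4).1.card = 2 := by
        rw [show (4:ℕ) = c.length from by omega, hlv]; exact hk
      have h2eq : (c.getVert 2).1 = {x, y} := by
        refine (Finset.eq_of_subset_of_card_le ?_ ?_).symm
        · intro a ha
          rcases Finset.mem_insert.mp ha with rfl | ha
          · exact hx2
          · rw [Finset.mem_singleton.mp ha]; exact hy2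
        · rw [hc22, Finset.card_pair hxy]
      have h4eq : (c.getVert 4).1 = {x, y} := by
        refine (Finset.eq_of_subset_of_card_le ?_ ?_).symm
        · intro a ha
          rcases Finset.mem_insert.mp ha with rfl | ha
          · exact hx4
          · rw [Finset.mem_singleton.mp ha]; exact hy4
        · rw [hv2, Finset.card_pair hxy]
      exact inj14 2 4 (by norm_num) (by omega) (by norm_num) (by omega) (by norm_num)
        (h2eq.trans h4eq.symm)
  have h6 : 6 ≤ c.length := by omega
  -- pick three singleton indices
  have pick : ∀ i1 i2 i3 : ℕ, 1 ≤ i1 → i1 < i2 → i2 < i3 → i3 ≤ c.length →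
      (c.getVert i1).1.card = 1 → (c.getVert i2).1.card = 1 → (c.getVert i3).1.card = 1 →
      ∃ a b d : Fin n, a ≠ b ∧ a ≠ d ∧ b ≠ d ∧
        ({a} : Finset (Fin n)) ∈ V ∧ ({b} : Finset (Fin n)) ∈ V ∧
        ({d} : Finset (Fin n)) ∈ V := by
    intro i1 i2 i3 g1 g2 g3 g4 e1 e2 e3
    obtain ⟨a, ha⟩ := Finset.card_eq_one.mp e1
    obtain ⟨b, hb⟩ := Finset.card_eq_one.mp e2
    obtain ⟨d, hd⟩ := Finset.card_eq_one.mp e3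
    refine ⟨a, b, d, ?_, ?_, ?_, ?_, ?_, ?_⟩
    · intro he
      exact cycle_getVert_inj hc (i := i1) (j := i2) (by omega) (by omega) (by omega)
        (by omega) (by omega) (Subtype.ext (by rw [ha, hb, he]))
    · intro he
      exact cycle_getVert_inj hc (i := i1) (j := i3) (by omega) (by omega) (by omega)
        (by omega) (by omega) (Subtype.ext (by rw [ha, hd, he]))
    · intro he
      exact cycle_getVert_inj hc (i := i2) (j := i3) (by omega) (by omega) (by omega)
        (by omega) (by omega) (Subtype.ext (by rw [hb, hd, he]))
    · rw [← ha]; exact (c.getVert i1).2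
    · rw [← hb]; exact (c.getVert i2).2
    · rw [← hd]; exact (c.getVert i3).2
  rcases hk0 with hk | hk
  · refine pick 2 4 6 (by norm_num) (by norm_num) (by norm_num) h6 ?_ ?_ ?_
    · have := hcard 2 (by omega); rw [if_pos (by norm_num), hk] at this; exact this
    · have := hcard 4 (by omega); rw [if_pos (by norm_num), hk] at this; exact this
    · have := hcard 6 (by omega); rw [if_pos (by norm_num), hk] at this; exact this
  · refine pick 1 3 5 (by norm_num) (by norm_num) (by norm_num) (by omega) ?_ ?_ ?_
    · have := hcard 1 (by omega); rw [if_neg (by norm_num), hk] at this; exact this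
    · have := hcard 3 (by omega); rw [if_neg (by norm_num), hk] at this; exact this
    · have := hcard 5 (by omega); rw [if_neg (by norm_num), hk] at this; exact this

end C2


section Peri
variable {n : ℕ}

def Tw (V : Set (Finset (Fin n))) (i j : Fin n) : Prop :=
  ∃ B ∈ V, B ∩ ({i, j} : Finset (Fin n)) = {i}

def Ew (V : Set (Finset (Fin n))) (i j : Fin n) : Prop :=
  ∃ B ∈ V, B ∩ ({i, j} : Finset (Fin n)) = ∅

def Bad (V1 V2 : Set (Finset (Fin n))) (i j : Fin n) : Prop :=
  i ≠ j ∧ ({i, j} : Finset (Fin n)) ∈ V1 ∧ ({i, j} : Finset (Fin n)) ∈ V2 ∧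
    Tw V1 i j ∧ Tw V1 j i ∧ Ew V1 i j ∧ Tw V2 i j ∧ Tw V2 j i ∧ Ew V2 i j

lemma sing_skset {x : Fin n} : ({x} : Finset (Fin n)) ∈ SKset n :=
  Or.inl (Finset.card_singleton x)

lemma pair_skset {x y : Fin n} (hxy : x ≠ y) : ({x, y} : Finset (Fin n)) ∈ SKset n :=
  Or.inr (Finset.card_pair hxy)

variable {VA VB : Set (Finset (Fin n))}

/-- edge condition forces star of an `A`-only singleton into `A`. -/
lemma star_mem
    (hedgeAB : ∀ u ∈ SKset n, ∀ v ∈ SKset n, (cubeGraph n).Adj u v →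
      (u ∈ VA ∧ v ∈ VA) ∨ (u ∈ VB ∧ v ∈ VB))
    {y : Fin n} (hyB : ({y} : Finset (Fin n)) ∉ VB) {v : Fin n} (hvy : v ≠ y) :
    ({y, v} : Finset (Fin n)) ∈ VA ∧ ({y} : Finset (Fin n)) ∈ VA := by
  have := hedgeAB {y} sing_skset {y, v} (pair_skset (Ne.symm hvy)) (adjSP (Ne.symm hvy))
  rcases this with ⟨h1, h2⟩ | ⟨h1, _⟩
  · exact ⟨h2, h1⟩
  · exact absurd h1 hyB

/-- at most one pair at y lies in VB when {y} ∉ VB. -/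
lemma unique_pair (hB : VB ⊆ SKset n) (hpcB : IsPC VB)
    {y v w : Fin n} (hyB : ({y} : Finset (Fin n)) ∉ VB)
    (hv : ({y, v} : Finset (Fin n)) ∈ VB) (hw : ({y, w} : Finset (Fin n)) ∈ VB)
    (hvy : v ≠ y) (hwy : w ≠ y) : v = w := by
  by_contra hvw
  exact hyB (singleton_mem hB hpcB (Ne.symm hvy) (Ne.symm hwy) hvw hv hw)

/-- existence of a singleton in VA \ VB from any element of VA \ VB. -/
lemma sing_diff (hA : VA ⊆ SKset n) (hB : VB ⊆ SKset n) (hpcB : IsPC VB)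
    (hedgeAB : ∀ u ∈ SKset n, ∀ v ∈ SKset n, (cubeGraph n).Adj u v →
      (u ∈ VA ∧ v ∈ VA) ∨ (u ∈ VB ∧ v ∈ VB))
    {a : Finset (Fin n)} (haA : a ∈ VA) (haB : a ∉ VB) :
    ∃ y : Fin n, ({y} : Finset (Fin n)) ∈ VA ∧ ({y} : Finset (Fin n)) ∉ VB := by
  rcases hA haA with hc | hc
  · obtain ⟨x, rfl⟩ := Finset.card_eq_one.mp hc
    exact ⟨x, haA, haB⟩
  · obtain ⟨x, y, hxy, rfl⟩ := Finset.card_eq_two.mp hc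
    have ex : ({x} : Finset (Fin n)) ∈ VA := by
      rcases hedgeAB {x} sing_skset {x, y} (pair_skset hxy) (adjSP hxy) with h | h
      · exact h.1
      · exact absurd h.2 haB
    have ey : ({y} : Finset (Fin n)) ∈ VA := by
      have hcomm : ({x, y} : Finset (Fin n)) = {y, x} := Finset.pair_comm x y
      rcases hedgeAB {y} sing_skset {y, x} (pair_skset (Ne.symm hxy))
          (adjSP (Ne.symm hxy)) with h | h
      · exact h.1
      · rw [← hcomm] at h
        exact absurd h.2 haB
    by_cases hx2 : ({x} : Finset (Fin n)) ∈ VB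
    · by_cases hy2 : ({y} : Finset (Fin n)) ∈ VB
      · exact absurd (pair_mem hB hpcB hxy hx2 hy2) haB
      · exact ⟨y, ey, hy2⟩
    · exact ⟨x, ex, hx2⟩

end Peri

section Peri2
variable {n : ℕ} {V1 V2 : Set (Finset (Fin n))}

lemma peripheral_of_no_bad (hn : 4 ≤ n)
    (h1 : V1 ⊆ SKset n) (h2 : V2 ⊆ SKset n) (hi1 : IsPC V1) (hi2 : IsPC V2)
    (hedge : ∀ u ∈ SKset n, ∀ v ∈ SKset n, (cubeGraph n).Adj u v →
      (u ∈ V1 ∧ v ∈ V1) ∨ (u ∈ V2 ∧ v ∈ V2))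
    (hnb : ¬ ∃ i j, Bad V1 V2 i j) :
    V1 ⊆ V2 ∨ V2 ⊆ V1 := by
  by_contra hP
  push_neg at hP
  obtain ⟨hP1, hP2⟩ := hP
  obtain ⟨a, haA, haB⟩ := Set.not_subset.mp hP1
  obtain ⟨b, hbA, hbB⟩ := Set.not_subset.mp hP2
  have hedge' : ∀ u ∈ SKset n, ∀ v ∈ SKset n, (cubeGraph n).Adj u v →
      (u ∈ V2 ∧ v ∈ V2) ∨ (u ∈ V1 ∧ v ∈ V1) :=
    fun u hu v hv h => (hedge u hu v hv h).symm
  obtain ⟨y, hy1, hy2⟩ := sing_diff h1 h2 hi2 hedge haA haB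
  obtain ⟨z, hz2, hz1⟩ := sing_diff h2 h1 hi1 hedge' hbA hbB
  have hyz : y ≠ z := by
    rintro rfl; exact hz1 hy1
  -- {y, z} ∈ V2 via star of z
  have hyz2 : ({y, z} : Finset (Fin n)) ∈ V2 := by
    have := (star_mem hedge' hz1 (v := y) hyz).1
    rwa [Finset.pair_comm z y] at this
  have hzy1 : ({y, z} : Finset (Fin n)) ∈ V1 := (star_mem hedge hy2 (v := z) (Ne.symm hyz)).1
  -- find u v distinct outside {y, z}
  have hcard : 1 < ((Finset.univ.erase y).erase z : Finset (Fin n)).card := by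
    have h1c : (Finset.univ.erase y : Finset (Fin n)).card = n - 1 := by
      rw [Finset.card_erase_of_mem (Finset.mem_univ y), Finset.card_univ, Fintype.card_fin]
    have h2c : ((Finset.univ.erase y).erase z : Finset (Fin n)).card = n - 2 := by
      rw [Finset.card_erase_of_mem, h1c]
      · omega
      · exact Finset.mem_erase.mpr ⟨Ne.symm hyz, Finset.mem_univ z⟩
    omega
  obtain ⟨u, hu, v, hv, huv⟩ := Finset.one_lt_card.mp hcard
  have huy : u ≠ y := (Finset.mem_erase.mp (Finset.mem_erase.mp hu).2).1
  have huz : u ≠ z := (Finset.mem_erase.mp hu).1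
  have hvy : v ≠ y := (Finset.mem_erase.mp (Finset.mem_erase.mp hv).2).1
  have hvz : v ≠ z := (Finset.mem_erase.mp hv).1
  -- every u outside {y,z} has {u} in both
  have key : ∀ w : Fin n, w ≠ y → w ≠ z → ({w} : Finset (Fin n)) ∈ V1 ∧
      ({w} : Finset (Fin n)) ∈ V2 := by
    intro w hwy hwz
    constructor
    · -- {y,w} ∈ V1 \ V2, edge {w}-{y,w} forced into V1
      have hyw1 : ({y, w} : Finset (Fin n)) ∈ V1 := (star_mem hedge hy2 hwy).1
      have hyw2 : ({y, w} : Finset (Fin n)) ∉ V2 := by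
        intro hmem
        exact hwz (unique_pair h2 hi2 hy2 hmem hyz2 hwy (Ne.symm hyz))
      have hadj : (cubeGraph n).Adj {w} {y, w} := by
        have := adjSP hwy
        rwa [Finset.pair_comm w y] at this
      rcases hedge {w} sing_skset {y, w} (pair_skset (fun h => hwy h.symm)) hadj with h | h
      · exact h.1
      · exact absurd h.2 hyw2
    · have hzw2 : ({z, w} : Finset (Fin n)) ∈ V2 := (star_mem hedge' hz1 hwz).1
      have hzw1 : ({z, w} : Finset (Fin n)) ∉ V1 := by
        intro hmem
        apply hwy
        have hzy1' : ({z, y} : Finset (Fin n)) ∈ V1 := by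
          rwa [Finset.pair_comm z y]
        exact unique_pair h1 hi1 hz1 hmem hzy1' hwz (Ne.symm hyz).symm
      have hadj : (cubeGraph n).Adj {w} {z, w} := by
        have := adjSP hwz
        rwa [Finset.pair_comm w z] at this
      rcases hedge {w} sing_skset {z, w} (pair_skset (fun h => hwz h.symm)) hadj with h | h
      · exact absurd h.2 hzw1
      · exact h.1
  obtain ⟨hu1, hu2⟩ := key u huy huz
  obtain ⟨hv1, hv2⟩ := key v hvy hvz
  apply hnb
  refine ⟨u, v, huv, pair_mem h1 hi1 huv hu1 hv1, pair_mem h2 hi2 huv hu2 hv2, ?_, ?_, ?_, ?_, ?_, ?_⟩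
  · exact ⟨{u}, hu1, Finset.singleton_inter_of_mem (Finset.mem_insert_self u {v})⟩
  · exact ⟨{v}, hv1, Finset.singleton_inter_of_mem (Finset.mem_insert_self v {u})⟩
  · refine ⟨{y}, hy1, Finset.singleton_inter_of_notMem ?_⟩
    simp only [Finset.mem_insert, Finset.mem_singleton]
    push_neg
    exact ⟨Ne.symm huy, Ne.symm hvy⟩
  · exact ⟨{u}, hu2, Finset.singleton_inter_of_mem (Finset.mem_insert_self u {v})⟩
  · exact ⟨{v}, hv2, Finset.singleton_inter_of_mem (Finset.mem_insert_self v {u})⟩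
  · refine ⟨{z}, hz2, Finset.singleton_inter_of_notMem ?_⟩
    simp only [Finset.mem_insert, Finset.mem_singleton]
    push_neg
    exact ⟨Ne.symm huz, Ne.symm hvz⟩

/-- connectivity of an isometric nonempty subfamily -/
lemma connected_of_pc {V : Set (Finset (Fin n))} (hpc : IsPC V) (hne : V.Nonempty) :
    ((cubeGraph n).induce V).Connected := by
  rw [SimpleGraph.connected_iff]
  constructor
  · intro u v
    by_cases h : u = v
    · rw [h]
    · -- reachable
      have hd := hpc u v
      have hcne : (symmDiff u.1 v.1).card ≠ 0 := by
        intro hcc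
        rw [Finset.card_eq_zero, Finset.symmDiff_eq_empty] at hcc
        exact h (Subtype.ext hcc)
      by_contra hr
      rw [SimpleGraph.dist_eq_zero_iff_eq_or_not_reachable.mpr (Or.inr hr)] at hd
      exact hcne hd.symm
  · obtain ⟨x, hx⟩ := hne
    exact ⟨⟨x, hx⟩⟩

end Peri2


section Sh
variable {n : ℕ}

lemma last_not_mem_image (B : Finset (Fin n)) :
    Fin.last n ∉ B.image Fin.castSucc := by
  intro h
  obtain ⟨x, -, hx⟩ := Finset.mem_image.mp h
  exact (Fin.castSucc_lt_last x).ne hx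

lemma castSucc_inj' : Function.Injective (Fin.castSucc : Fin n → Fin (n+1)) :=
  Fin.castSucc_injective n

/-- the 3-element set associated to a pair -/
def Yij (i j : Fin n) : Finset (Fin (n+1)) :=
  insert (Fin.last n) (({i, j} : Finset (Fin n)).image Fin.castSucc)

lemma Yij_card {i j : Fin n} (hij : i ≠ j) : (Yij i j).card = 3 := by
  rw [Yij, Finset.card_insert_of_notMem (last_not_mem_image _),
    Finset.card_image_of_injective _ castSucc_inj', Finset.card_pair hij]

lemma image_inter_Yij (i j : Fin n) (C : Finset (Fin n)) :
    (C.image Fin.castSucc) ∩ Yij i j = (C ∩ {i, j}).image Fin.castSucc := by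
  rw [Yij, Finset.inter_insert_of_notMem (last_not_mem_image C),
    Finset.image_inter _ _ castSucc_inj']

lemma insert_inter_Yij (i j : Fin n) (C : Finset (Fin n)) :
    (insert (Fin.last n) (C.image Fin.castSucc)) ∩ Yij i j =
      insert (Fin.last n) ((C ∩ {i, j}).image Fin.castSucc) := by
  rw [Yij, Finset.insert_inter_of_mem (Finset.mem_insert_self _ _),
    Finset.inter_insert_of_notMem (last_not_mem_image C),
    Finset.image_inter _ _ castSucc_inj']

lemma subset_Yij_cases {i j : Fin n} {Z : Finset (Fin (n+1))} (hZ : Z ⊆ Yij i j) :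
    ∀ x ∈ Z, x = Fin.last n ∨ x = i.castSucc ∨ x = j.castSucc := by
  intro x hx
  have := hZ hx
  rw [Yij] at this
  rcases Finset.mem_insert.mp this with h | h
  · exact Or.inl h
  · simp only [Finset.mem_image, Finset.mem_insert, Finset.mem_singleton] at h
    obtain ⟨a, ha, rfl⟩ := h
    rcases ha with rfl | rfl
    · exact Or.inr (Or.inl rfl)
    · exact Or.inr (Or.inr rfl)

lemma shatters_of_bad {V1 V2 : Set (Finset (Fin n))} {i j : Fin n}
    (hb : Bad V1 V2 i j) : Shatters (expansion V1 V2) (Yij i j) := by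
  obtain ⟨hij, hp1, hp2, ⟨Bi, hBi, hBi'⟩, ⟨Bj, hBj, hBj'⟩, ⟨Be, hBe, hBe'⟩,
    ⟨Ci, hCi, hCi'⟩, ⟨Cj, hCj, hCj'⟩, ⟨Ce, hCe, hCe'⟩⟩ := hb
  intro Z hZ
  -- Z is determined by its memberships of the three elements
  have hZc := subset_Yij_cases hZ
  by_cases hl : Fin.last n ∈ Z
  · -- witness from V2
    by_cases hi : i.castSucc ∈ Z
    · by_cases hj : j.castSucc ∈ Z
      · -- Z = Yij i j ; use {i,j} ∈ V2
        have hZeq : Z = Yij i j := by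
          apply Finset.Subset.antisymm hZ
          intro x hx
          rcases Finset.mem_insert.mp hx with rfl | hx
          · exact hl
          · simp only [Finset.mem_image, Finset.mem_insert, Finset.mem_singleton] at hx
            obtain ⟨a, ha, rfl⟩ := hx
            rcases ha with rfl | rfl
            · exact hi
            · exact hj
        refine ⟨insert (Fin.last n) (({i,j} : Finset (Fin n)).image Fin.castSucc),
          Or.inr ⟨{i,j}, hp2, rfl⟩, ?_⟩
        rw [insert_inter_Yij, Finset.inter_self, hZeq, Yij]
      · -- Z = {last, i'} ; use Ci
        have hZeq : Z = insert (Fin.last n) ((({i} : Finset (Fin n))).image Fin.castSucc) := by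
          apply Finset.Subset.antisymm
          · intro x hx
            rcases hZc x hx with rfl | rfl | rfl
            · exact Finset.mem_insert_self _ _
            · exact Finset.mem_insert_of_mem (by simp)
            · exact absurd hx hj
          · intro x hx
            rcases Finset.mem_insert.mp hx with rfl | hx
            · exact hl
            · simp only [Finset.mem_image, Finset.mem_singleton] at hx
              obtain ⟨a, rfl, rfl⟩ := hx
              exact hi
        refine ⟨insert (Fin.last n) (Ci.image Fin.castSucc), Or.inr ⟨Ci, hCi, rfl⟩, ?_⟩
        rw [insert_inter_Yij, hCi', hZeq]
    · by_cases hj : j.castSucc ∈ Z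
      · -- Z = {last, j'} ; use Cj
        have hZeq : Z = insert (Fin.last n) ((({j} : Finset (Fin n))).image Fin.castSucc) := by
          apply Finset.Subset.antisymm
          · intro x hx
            rcases hZc x hx with rfl | rfl | rfl
            · exact Finset.mem_insert_self _ _
            · exact absurd hx hi
            · exact Finset.mem_insert_of_mem (by simp)
          · intro x hx
            rcases Finset.mem_insert.mp hx with rfl | hx
            · exact hl
            · simp only [Finset.mem_image, Finset.mem_singleton] at hx
              obtain ⟨a, rfl, rfl⟩ := hx
              exact hj
        refine ⟨insert (Fin.last n) (Cj.image Fin.castSucc), Or.inr ⟨Cj, hCj, rfl⟩, ?_⟩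
        rw [insert_inter_Yij, Finset.pair_comm i j, hCj', hZeq]
      · -- Z = {last} ; use Ce
        have hZeq : Z = insert (Fin.last n) ((∅ : Finset (Fin n)).image Fin.castSucc) := by
          apply Finset.Subset.antisymm
          · intro x hx
            rcases hZc x hx with rfl | rfl | rfl
            · exact Finset.mem_insert_self _ _
            · exact absurd hx hi
            · exact absurd hx hj
          · intro x hx
            rcases Finset.mem_insert.mp hx with rfl | hx
            · exact hl
            · simp at hx
        refine ⟨insert (Fin.last n) (Ce.image Fin.castSucc), Or.inr ⟨Ce, hCe, rfl⟩, ?_⟩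
        rw [insert_inter_Yij, hCe', hZeq]
  · -- witness from V1
    by_cases hi : i.castSucc ∈ Z
    · by_cases hj : j.castSucc ∈ Z
      · -- Z = {i', j'} ; use {i, j} ∈ V1
        have hZeq : Z = (({i, j} : Finset (Fin n))).image Fin.castSucc := by
          apply Finset.Subset.antisymm
          · intro x hx
            rcases hZc x hx with rfl | rfl | rfl
            · exact absurd hx hl
            · exact Finset.mem_image_of_mem _ (Finset.mem_insert_self _ _)
            · exact Finset.mem_image_of_mem _ (by simp)
          · intro x hx
            simp only [Finset.mem_image, Finset.mem_insert, Finset.mem_singleton] at hx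
            obtain ⟨a, ha, rfl⟩ := hx
            rcases ha with rfl | rfl
            · exact hi
            · exact hj
        refine ⟨({i, j} : Finset (Fin n)).image Fin.castSucc, Or.inl ⟨{i, j}, hp1, rfl⟩, ?_⟩
        rw [image_inter_Yij, Finset.inter_self, hZeq]
      · -- Z = {i'} ; use Bi
        have hZeq : Z = (({i} : Finset (Fin n))).image Fin.castSucc := by
          apply Finset.Subset.antisymm
          · intro x hx
            rcases hZc x hx with rfl | rfl | rfl
            · exact absurd hx hl
            · exact Finset.mem_image_of_mem _ (by simp)
            · exact absurd hx hj
          · intro x hx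
            simp only [Finset.mem_image, Finset.mem_singleton] at hx
            obtain ⟨a, rfl, rfl⟩ := hx
            exact hi
        refine ⟨Bi.image Fin.castSucc, Or.inl ⟨Bi, hBi, rfl⟩, ?_⟩
        rw [image_inter_Yij, hBi', hZeq]
    · by_cases hj : j.castSucc ∈ Z
      · -- Z = {j'} ; use Bj
        have hZeq : Z = (({j} : Finset (Fin n))).image Fin.castSucc := by
          apply Finset.Subset.antisymm
          · intro x hx
            rcases hZc x hx with rfl | rfl | rfl
            · exact absurd hx hl
            · exact absurd hx hi
            · exact Finset.mem_image_of_mem _ (by simp)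
          · intro x hx
            simp only [Finset.mem_image, Finset.mem_singleton] at hx
            obtain ⟨a, rfl, rfl⟩ := hx
            exact hj
        refine ⟨Bj.image Fin.castSucc, Or.inl ⟨Bj, hBj, rfl⟩, ?_⟩
        rw [image_inter_Yij, Finset.pair_comm i j, hBj', hZeq]
      · -- Z = ∅ ; use Be
        have hZeq : Z = (∅ : Finset (Fin n)).image Fin.castSucc := by
          apply Finset.Subset.antisymm
          · intro x hx
            rcases hZc x hx with rfl | rfl | rfl
            · exact absurd hx hl
            · exact absurd hx hi
            · exact absurd hx hj
          · intro x hx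
            simp at hx
        refine ⟨Be.image Fin.castSucc, Or.inl ⟨Be, hBe, rfl⟩, ?_⟩
        rw [image_inter_Yij, hBe', hZeq]
end Sh

section Sh2
variable {n : ℕ} {V1 V2 : Set (Finset (Fin n))}

lemma image_imp_eq {T S : Finset (Fin n)}
    (h : T.image Fin.castSucc = S.image Fin.castSucc) : T = S :=
  Finset.image_injective castSucc_inj' h

lemma bad_of_shatters (h1 : V1 ⊆ SKset n) (h2 : V2 ⊆ SKset n)
    {Y : Finset (Fin (n+1))} (hY : Y.card = 3)
    (hs : Shatters (expansion V1 V2) Y) : ∃ i j, Bad V1 V2 i j := by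
  obtain ⟨B', hB', hBY⟩ := hs Y (Finset.Subset.refl Y)
  have hsub : Y ⊆ B' := Finset.inter_eq_right.mp hBY
  rcases hB' with ⟨B, hB, rfl⟩ | ⟨B, hB, rfl⟩
  · exfalso
    have hc : B.card ≤ 2 := by rcases h1 hB with h | h <;> omega
    have := Finset.card_le_card hsub
    rw [Finset.card_image_of_injective _ castSucc_inj', hY] at this
    omega
  · have hBcard : (insert (Fin.last n) (B.image Fin.castSucc)).card = B.card + 1 := by
      rw [Finset.card_insert_of_notMem (last_not_mem_image B),
        Finset.card_image_of_injective _ castSucc_inj']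
    have hc2 : B.card ≤ 2 := by rcases h2 hB with h | h <;> omega
    have hYeq : Y = insert (Fin.last n) (B.image Fin.castSucc) := by
      apply Finset.eq_of_subset_of_card_le hsub
      show (insert (Fin.last n) (B.image Fin.castSucc)).card ≤ Y.card
      omega
    have hcB : B.card = 2 := by
      have := congrArg Finset.card hYeq
      rw [hY, hBcard] at this
      omega
    obtain ⟨i, j, hij, rfl⟩ := Finset.card_eq_two.mp hcB
    have hYij : Y = Yij i j := hYeq
    -- extraction helpers
    have hV1w : ∀ Z : Finset (Fin (n+1)), Z ⊆ Y → Fin.last n ∉ Z →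
        ∃ C ∈ V1, (C ∩ ({i, j} : Finset (Fin n))).image Fin.castSucc = Z := by
      intro Z hZ hl
      obtain ⟨B', hB', hBZ⟩ := hs Z hZ
      rcases hB' with ⟨C, hC, rfl⟩ | ⟨C, hC, rfl⟩
      · refine ⟨C, hC, ?_⟩
        rw [← image_inter_Yij, ← hYij]
        exact hBZ
      · exfalso
        apply hl
        rw [← hBZ]
        exact Finset.mem_inter.mpr ⟨Finset.mem_insert_self _ _,
          by rw [hYij]; exact Finset.mem_insert_self _ _⟩
    have hV2w : ∀ Z : Finset (Fin (n+1)), Z ⊆ Y → Fin.last n ∈ Z →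
        ∃ C ∈ V2, insert (Fin.last n) ((C ∩ ({i, j} : Finset (Fin n))).image Fin.castSucc)
          = Z := by
      intro Z hZ hl
      obtain ⟨B', hB', hBZ⟩ := hs Z hZ
      rcases hB' with ⟨C, hC, rfl⟩ | ⟨C, hC, rfl⟩
      · exfalso
        apply last_not_mem_image C
        rw [← hBZ] at hl
        exact (Finset.mem_inter.mp hl).1
      · refine ⟨C, hC, ?_⟩
        rw [← insert_inter_Yij, ← hYij]
        exact hBZ
    -- subset facts
    have hsub1 : ∀ T : Finset (Fin n), T ⊆ {i, j} → T.image Fin.castSucc ⊆ Y := by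
      intro T hT
      rw [hYij, Yij]
      exact (Finset.image_subset_image hT).trans (Finset.subset_insert _ _)
    have hsub2 : ∀ T : Finset (Fin n), T ⊆ {i, j} →
        insert (Fin.last n) (T.image Fin.castSucc) ⊆ Y := by
      intro T hT
      rw [hYij, Yij]
      exact Finset.insert_subset_insert _ (Finset.image_subset_image hT)
    -- strip the insert
    have strip : ∀ S T : Finset (Fin n),
        insert (Fin.last n) (S.image Fin.castSucc) =
          insert (Fin.last n) (T.image Fin.castSucc) → S = T := by
      intro S T h
      apply image_imp_eq
      have := congrArg (Finset.erase · (Fin.last n)) h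
      simpa [Finset.erase_insert (last_not_mem_image S),
        Finset.erase_insert (last_not_mem_image T)] using this
    -- extract all witnesses
    obtain ⟨Bi, hBi, hBi'⟩ := hV1w (({i} : Finset (Fin n)).image Fin.castSucc)
      (hsub1 _ (by simp)) (last_not_mem_image _)
    obtain ⟨Bj, hBj, hBj'⟩ := hV1w (({j} : Finset (Fin n)).image Fin.castSucc)
      (hsub1 _ (by simp)) (last_not_mem_image _)
    obtain ⟨Be, hBe, hBe'⟩ := hV1w ((∅ : Finset (Fin n)).image Fin.castSucc)
      (hsub1 _ (by simp)) (last_not_mem_image _)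
    obtain ⟨Bp, hBp, hBp'⟩ := hV1w (({i, j} : Finset (Fin n)).image Fin.castSucc)
      (hsub1 _ (by simp)) (last_not_mem_image _)
    obtain ⟨Ci, hCi, hCi'⟩ := hV2w (insert (Fin.last n) (({i} : Finset (Fin n)).image
      Fin.castSucc)) (hsub2 _ (by simp)) (Finset.mem_insert_self _ _)
    obtain ⟨Cj, hCj, hCj'⟩ := hV2w (insert (Fin.last n) (({j} : Finset (Fin n)).image
      Fin.castSucc)) (hsub2 _ (by simp)) (Finset.mem_insert_self _ _)
    obtain ⟨Ce, hCe, hCe'⟩ := hV2w (insert (Fin.last n) ((∅ : Finset (Fin n)).image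
      Fin.castSucc)) (hsub2 _ (by simp)) (Finset.mem_insert_self _ _)
    -- convert
    have ei : Bi ∩ {i, j} = {i} := image_imp_eq hBi'
    have ej : Bj ∩ {i, j} = {j} := image_imp_eq hBj'
    have ee : Be ∩ {i, j} = ∅ := image_imp_eq hBe'
    have ep : Bp ∩ {i, j} = {i, j} := image_imp_eq hBp'
    have fi : Ci ∩ {i, j} = {i} := strip _ _ hCi'
    have fj : Cj ∩ {i, j} = {j} := strip _ _ hCj'
    have fe : Ce ∩ {i, j} = ∅ := strip _ _ hCe'
    have hpV1 : ({i, j} : Finset (Fin n)) ∈ V1 := by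
      have hsubp : ({i, j} : Finset (Fin n)) ⊆ Bp := by
        rw [← ep]; exact Finset.inter_subset_left
      have hcp : Bp.card ≤ 2 := by rcases h1 hBp with h | h <;> omega
      have : ({i, j} : Finset (Fin n)) = Bp := by
        apply Finset.eq_of_subset_of_card_le hsubp
        rw [Finset.card_pair hij]; omega
      rwa [this]
    refine ⟨i, j, hij, hpV1, hB, ⟨Bi, hBi, ei⟩, ⟨Bj, hBj, by rwa [Finset.pair_comm j i]⟩,
      ⟨Be, hBe, ee⟩, ⟨Ci, hCi, fi⟩, ⟨Cj, hCj, by rwa [Finset.pair_comm j i]⟩,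
      ⟨Ce, hCe, fe⟩⟩

lemma shatters_mono {m : ℕ} {V : Set (Finset (Fin m))} {Y Y' : Finset (Fin m)}
    (hs : Shatters V Y) (hsub : Y' ⊆ Y) : Shatters V Y' := by
  intro Z hZ
  obtain ⟨B, hB, hBY⟩ := hs Z (hZ.trans hsub)
  refine ⟨B, hB, ?_⟩
  have hstep : B ∩ Y' = (B ∩ Y) ∩ Y' := by
    rw [Finset.inter_assoc, Finset.inter_eq_right.mpr hsub]
  rw [hstep, hBY, Finset.inter_eq_left.mpr hZ]

lemma vc_iff (h1 : V1 ⊆ SKset n) (h2 : V2 ⊆ SKset n) :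
    VCdimLE (expansion V1 V2) 2 ↔ ¬ ∃ i j, Bad V1 V2 i j := by
  constructor
  · rintro hvc ⟨i, j, hb⟩
    have := hvc (Yij i j) (shatters_of_bad hb)
    rw [Yij_card hb.1] at this
    omega
  · intro hnb Y hsY
    by_contra hc
    push_neg at hc
    obtain ⟨Y', hY'sub, hY'⟩ := Finset.exists_subset_card_eq (s := Y) (n := 3) (by omega)
    exact hnb (bad_of_shatters h1 h2 hY' (shatters_mono hsY hY'sub))

end Sh2



section Main
variable {n : ℕ} {V1 V2 : Set (Finset (Fin n))}

/-- a trace witness plus the pair forces the singleton. -/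
lemma sing_from_tw {V : Set (Finset (Fin n))} (hV : V ⊆ SKset n) (hpc : IsPC V)
    {i j : Fin n} (hij : i ≠ j) (hp : ({i, j} : Finset (Fin n)) ∈ V) (hti : Tw V i j) :
    ({i} : Finset (Fin n)) ∈ V := by
  obtain ⟨B, hB, hBij⟩ := hti
  have hiB : i ∈ B := by
    have : i ∈ B ∩ ({i, j} : Finset (Fin n)) := by
      rw [hBij]; exact Finset.mem_singleton_self i
    exact (Finset.mem_inter.mp this).1
  have hjB : j ∉ B := by
    intro hj
    have : j ∈ B ∩ ({i, j} : Finset (Fin n)) :=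
      Finset.mem_inter.mpr ⟨hj, by simp⟩
    rw [hBij, Finset.mem_singleton] at this
    exact hij this.symm
  rcases hV hB with hc | hc
  · obtain ⟨x, rfl⟩ := Finset.card_eq_one.mp hc
    rw [Finset.mem_singleton] at hiB
    rwa [hiB]
  · obtain ⟨x, y, hxy, rfl⟩ := Finset.card_eq_two.mp hc
    rcases Finset.mem_insert.mp hiB with rfl | hiB'
    · -- B = {i, y}
      have hyj : y ≠ j := by rintro rfl; exact hjB (by simp)
      have hiy : i ≠ y := hxy
      exact singleton_mem hV hpc hiy hij hyj hB hp
    · rw [Finset.mem_singleton] at hiB'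
      subst hiB'
      -- B = {x, i}
      have hxj : x ≠ j := by rintro rfl; exact hjB (by simp)
      have hxi : x ≠ i := hxy
      rw [Finset.pair_comm x i] at hB
      exact singleton_mem hV hpc (Ne.symm hxi) hij hxj hB hp

/-- If V0 is an isometric tree, no single-side bad configuration exists. -/
lemma bad_one_side {V : Set (Finset (Fin n))} (hV : V ⊆ SKset n) (hpc : IsPC V)
    (hac : ((cubeGraph n).induce V).IsAcyclic) {i j : Fin n} (hij : i ≠ j)
    (hp : ({i, j} : Finset (Fin n)) ∈ V) (hti : Tw V i j) (htj : Tw V j i)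
    (hte : Ew V i j) : False := by
  have hi : ({i} : Finset (Fin n)) ∈ V := sing_from_tw hV hpc hij hp hti
  have hj : ({j} : Finset (Fin n)) ∈ V := by
    apply sing_from_tw hV hpc (Ne.symm hij) _ htj
    rwa [Finset.pair_comm j i]
  -- find a singleton {k} in V with k ∉ {i, j}
  obtain ⟨B, hB, hBe⟩ := hte
  have hdisj : ∀ x ∈ B, x ≠ i ∧ x ≠ j := by
    intro x hx
    constructor <;> rintro rfl
    · have : x ∈ B ∩ ({x, j} : Finset (Fin n)) := Finset.mem_inter.mpr ⟨hx, by simp⟩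
      rw [hBe] at this; exact absurd this (Finset.notMem_empty x)
    · have : x ∈ B ∩ ({i, x} : Finset (Fin n)) := Finset.mem_inter.mpr ⟨hx, by simp⟩
      rw [hBe] at this; exact absurd this (Finset.notMem_empty x)
  have hk : ∃ k : Fin n, k ≠ i ∧ k ≠ j ∧ ({k} : Finset (Fin n)) ∈ V := by
    rcases hV hB with hc | hc
    · obtain ⟨x, rfl⟩ := Finset.card_eq_one.mp hc
      obtain ⟨h1, h2⟩ := hdisj x (Finset.mem_singleton_self x)
      exact ⟨x, h1, h2, hB⟩
    · obtain ⟨x, y, hxy, rfl⟩ := Finset.card_eq_two.mp hc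
      have hne : ({i, j} : Finset (Fin n)) ≠ {x, y} := by
        intro h
        have : i ∈ ({x, y} : Finset (Fin n)) := h ▸ Finset.mem_insert_self i {j}
        rcases Finset.mem_insert.mp this with rfl | h'
        · exact (hdisj i (by simp)).1 rfl
        · rw [Finset.mem_singleton] at h'
          subst h'
          exact (hdisj i (by simp)).1 rfl
      rcases singleton_nbr hV hpc hxy hB hp hne with h | h
      · obtain ⟨h1, h2⟩ := hdisj x (by simp)
        exact ⟨x, h1, h2, h⟩
      · obtain ⟨h1, h2⟩ := hdisj y (by simp)
        exact ⟨y, h1, h2, h⟩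
  obtain ⟨k, hki, hkj, hkV⟩ := hk
  exact no_theta hV hpc hac hij (Ne.symm hki) (Ne.symm hkj) hi hj hkV hp

/-- no bad configuration implies the intersection graph is a tree. -/
lemma tree_of_no_bad (hnb : ¬ ∃ i j, Bad V1 V2 i j)
    (hsk : V1 ∩ V2 ⊆ SKset n) (hpc0 : IsPC (V1 ∩ V2)) (hne : (V1 ∩ V2).Nonempty) :
    ((cubeGraph n).induce (V1 ∩ V2)).IsTree := by
  rw [SimpleGraph.isTree_iff]
  refine ⟨connected_of_pc hpc0 hne, ?_⟩
  intro v c hc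
  obtain ⟨a, b, d, hab, had, hbd, ha, hb, hd⟩ := cycle_three_singletons hsk c hc
  have hpab : ({a, b} : Finset (Fin n)) ∈ V1 ∩ V2 := pair_mem hsk hpc0 hab ha hb
  apply hnb
  have hdab : d ∉ ({a, b} : Finset (Fin n)) := by
    simp only [Finset.mem_insert, Finset.mem_singleton]
    push_neg
    exact ⟨Ne.symm had, Ne.symm hbd⟩
  refine ⟨a, b, hab, hpab.1, hpab.2, ?_, ?_, ?_, ?_, ?_, ?_⟩
  · exact ⟨{a}, ha.1, Finset.singleton_inter_of_mem (Finset.mem_insert_self a {b})⟩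
  · exact ⟨{b}, hb.1, Finset.singleton_inter_of_mem (Finset.mem_insert_self b {a})⟩
  · exact ⟨{d}, hd.1, Finset.singleton_inter_of_notMem hdab⟩
  · exact ⟨{a}, ha.2, Finset.singleton_inter_of_mem (Finset.mem_insert_self a {b})⟩
  · exact ⟨{b}, hb.2, Finset.singleton_inter_of_mem (Finset.mem_insert_self b {a})⟩
  · exact ⟨{d}, hd.2, Finset.singleton_inter_of_notMem hdab⟩

end Main

/-- An isometric expansion of `SK_n` (`n ≥ 4`) is two-dimensional iff the
expansion is peripheral and performed along an isometric subtree of `SK_n`. -/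
theorem stmt13 (n : ℕ) (hn : 4 ≤ n) (V1 V2 : Set (Finset (Fin n)))
    (h1 : V1 ⊆ SKset n) (h2 : V2 ⊆ SKset n) (hi1 : IsPC V1) (hi2 : IsPC V2)
    (hcov : V1 ∪ V2 = SKset n)
    (hedge : ∀ u ∈ SKset n, ∀ v ∈ SKset n, (cubeGraph n).Adj u v →
      (u ∈ V1 ∧ v ∈ V1) ∨ (u ∈ V2 ∧ v ∈ V2))
    (hne : (V1 ∩ V2).Nonempty) :
    VCdimLE (expansion V1 V2) 2 ↔
      (V1 ⊆ V2 ∨ V2 ⊆ V1) ∧ IsPC (V1 ∩ V2) ∧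
        ((cubeGraph n).induce (V1 ∩ V2)).IsTree := by
  rw [vc_iff h1 h2]
  constructor
  · intro hnb
    have hper := peripheral_of_no_bad hn h1 h2 hi1 hi2 hedge hnb
    have hsk : V1 ∩ V2 ⊆ SKset n := fun x hx => h1 hx.1
    have hpc0 : IsPC (V1 ∩ V2) := by
      rcases hper with hsub | hsub
      · rw [Set.inter_eq_left.mpr hsub]; exact hi1
      · rw [Set.inter_eq_right.mpr hsub]; exact hi2
    exact ⟨hper, hpc0, tree_of_no_bad hnb hsk hpc0 hne⟩
  · rintro ⟨hper, hpc0, htree⟩ ⟨i, j, hb⟩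
    obtain ⟨hij, hp1, hp2, ht1i, ht1j, he1, ht2i, ht2j, he2⟩ := hb
    have hac := (SimpleGraph.isTree_iff _).mp htree |>.2
    rcases hper with hsub | hsub
    · have hV0 : V1 ∩ V2 = V1 := Set.inter_eq_left.mpr hsub
      rw [hV0] at hpc0 hac
      exact bad_one_side h1 hpc0 hac hij hp1 ht1i ht1j he1
    · have hV0 : V1 ∩ V2 = V2 := Set.inter_eq_right.mpr hsub
      rw [hV0] at hpc0 hac
      exact bad_one_side h2 hpc0 hac hij hp2 ht2i ht2j he2
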